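/- (Integral representation of the matrix logarithm.) Let A be a positive-definite Hermitian d×d complex matrix, and let log A denote its matrix logarithm (obtained by applying the real logarithm to the eigenvalues of A in a unitary eigendecomposition). Then log A = ∫₀^∞ [ (1+t)^{-1} I − (A + tI)^{-1} ] dt, where the integral of the matrix-valued function is taken entrywise. -/

import Mathlib

open MeasureTheory Set Filter Topology

lemma scalar_deriv {a : ℝ} (ha : 0 < a) {t : ℝ} (ht : 0 < t) :
    HasDerivAt (fun t => Real.log (1+t) - Real.log (a+t)) ((1+t)⁻¹ - (a+t)⁻¹) t := by
  have h1 : HasDerivAt (fun t : ℝ => Real.log (1+t)) ((1+t)⁻¹) t := by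
    simpa [Function.comp_def] using (Real.hasDerivAt_log (by linarith : (1:ℝ)+t ≠ 0)).comp t
      ((hasDerivAt_id t).const_add 1)
  have h2 : HasDerivAt (fun t : ℝ => Real.log (a+t)) ((a+t)⁻¹) t := by
    simpa [Function.comp_def] using (Real.hasDerivAt_log (by linarith : a+t ≠ 0)).comp t
      ((hasDerivAt_id t).const_add a)
  exact h1.sub h2

lemma scalar_tendsto {a : ℝ} (ha : 0 < a) :
    Tendsto (fun t => Real.log (1+t) - Real.log (a+t)) atTop (𝓝 0) := by
  have h1 : Tendsto (fun t : ℝ => 1 + (1-a)/(a+t)) atTop (𝓝 1) := by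
    have := Tendsto.div_atTop (tendsto_const_nhds (x := (1-a : ℝ)))
      (tendsto_atTop_add_const_left _ a tendsto_id)
    simpa using tendsto_const_nhds.add this
  have h2 : Tendsto (fun t : ℝ => Real.log (1 + (1-a)/(a+t))) atTop (𝓝 0) := by
    have := (Real.continuousAt_log one_ne_zero).tendsto.comp h1
    simpa [Function.comp_def] using this
  apply h2.congr'
  filter_upwards [eventually_gt_atTop 0] with t ht
  have hat : a + t ≠ 0 := by positivity
  rw [show 1 + (1-a)/(a+t) = (1+t)/(a+t) by field_simp; ring]
  rw [Real.log_div (by linarith) hat]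

lemma scalar_cont {a : ℝ} (ha : 0 < a) :
    ContinuousWithinAt (fun t => Real.log (1+t) - Real.log (a+t)) (Ici 0) 0 := by
  apply ContinuousAt.continuousWithinAt
  have h1 : ContinuousAt (fun t : ℝ => Real.log (1+t)) 0 :=
    (Real.continuousAt_log (by norm_num)).comp (by fun_prop)
  have h2 : ContinuousAt (fun t : ℝ => Real.log (a+t)) 0 :=
    (Real.continuousAt_log (by simpa using ha.ne')).comp (by fun_prop)
  exact h1.sub h2

lemma scalar_key {a : ℝ} (ha : 0 < a) :
    IntegrableOn (fun t => (1+t)⁻¹ - (a+t)⁻¹) (Ioi (0:ℝ)) ∧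
    ∫ t in Ioi (0:ℝ), ((1+t)⁻¹ - (a+t)⁻¹) = Real.log a := by
  have hF0 : Real.log (1+(0:ℝ)) - Real.log (a+0) = -Real.log a := by simp
  rcases le_or_gt 1 a with h1a | h1a
  · have hpos : ∀ t ∈ Ioi (0:ℝ), 0 ≤ (1+t)⁻¹ - (a+t)⁻¹ := by
      intro t ht
      simp only [mem_Ioi] at ht
      rw [sub_nonneg]
      exact inv_anti₀ (by linarith) (by linarith)
    have hint := integrableOn_Ioi_deriv_of_nonneg (scalar_cont ha)
      (fun t ht => scalar_deriv ha ht) hpos (scalar_tendsto ha)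
    refine ⟨hint, ?_⟩
    rw [integral_Ioi_of_hasDerivAt_of_tendsto (scalar_cont ha)
      (fun t ht => scalar_deriv ha ht) hint (scalar_tendsto ha), hF0]
    ring
  · have hpos : ∀ t ∈ Ioi (0:ℝ), 0 ≤ -((1+t)⁻¹ - (a+t)⁻¹) := by
      intro t ht
      simp only [mem_Ioi] at ht
      rw [neg_nonneg, sub_nonpos]
      exact inv_anti₀ (by linarith) (by linarith)
    have hint := integrableOn_Ioi_deriv_of_nonneg (g := fun t => -(Real.log (1+t) - Real.log (a+t)))
      (g' := fun t => -((1+t)⁻¹ - (a+t)⁻¹)) ((scalar_cont ha).neg)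
      (fun t ht => (scalar_deriv ha ht).neg) hpos (by simpa using (scalar_tendsto ha).neg)
    refine ⟨by refine hint.neg.congr (Filter.Eventually.of_forall fun x => ?_); simp, ?_⟩
    have hneg := integral_Ioi_of_hasDerivAt_of_tendsto (f := fun t => -(Real.log (1+t) - Real.log (a+t)))
      (f' := fun t => -((1+t)⁻¹ - (a+t)⁻¹)) ((scalar_cont ha).neg)
      (fun t ht => (scalar_deriv ha ht).neg) hint (by simpa using (scalar_tendsto ha).neg)
    rw [integral_neg] at hneg
    have : ∫ t in Ioi (0:ℝ), ((1+t)⁻¹ - (a+t)⁻¹) = -(0 - -(Real.log (1+(0:ℝ)) - Real.log (a+0))) := by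
      rw [← hneg]; ring
    rw [this, hF0]; ring

open Matrix
open scoped ComplexOrder

lemma entry_UDU {d : ℕ} (Uu : Matrix (Fin d) (Fin d) ℂ) (f : Fin d → ℂ) (i j : Fin d) :
    (Uu * Matrix.diagonal f * Uuᴴ) i j = ∑ k, Uu i k * f k * star (Uu j k) := by
  rw [Matrix.mul_apply]
  simp [Matrix.mul_diagonal, Matrix.conjTranspose_apply]

lemma smul_one_UDU {d : ℕ} {Uu : Matrix (Fin d) (Fin d) ℂ} (hUU : Uu * Uuᴴ = 1) (c : ℂ) :
    c • (1 : Matrix (Fin d) (Fin d) ℂ) = Uu * Matrix.diagonal (fun _ => c) * Uuᴴ := by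
  have h : Matrix.diagonal (fun _ : Fin d => c) = c • (1 : Matrix (Fin d) (Fin d) ℂ) := by
    ext i j
    by_cases h : i = j <;> simp [Matrix.diagonal, h, Matrix.one_apply]
  rw [h, Matrix.mul_smul, Matrix.mul_one, Matrix.smul_mul, hUU]

/-- **Integral representation of the matrix logarithm.** If `A` is positive-definite Hermitian
with unitary eigendecomposition `A = U diag(a) U†` (`a_k > 0`), and
`log A = U diag(log a) U†`, then entrywise
`log A = ∫₀^∞ [(1+t)⁻¹ I − (A + tI)⁻¹] dt`. -/
theorem matrix_log_integral_repr {d : ℕ}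
    (A : Matrix (Fin d) (Fin d) ℂ) (hA : A.PosDef)
    (Uu : Matrix (Fin d) (Fin d) ℂ) (a : Fin d → ℝ)
    (hUu : Uuᴴ * Uu = 1) (ha : ∀ k, 0 < a k)
    (hdecomp : A = Uu * Matrix.diagonal (fun k => (a k : ℂ)) * Uuᴴ)
    (logA : Matrix (Fin d) (Fin d) ℂ)
    (hlog : logA = Uu * Matrix.diagonal (fun k => (Real.log (a k) : ℂ)) * Uuᴴ) :
    ∀ i j, logA i j
      = ∫ t in Set.Ioi (0 : ℝ),
          ((((1 + t)⁻¹ : ℝ) • (1 : Matrix (Fin d) (Fin d) ℂ) - (A + (t : ℂ) • 1)⁻¹) i j) := by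
  have hUU : Uu * Uuᴴ = 1 := mul_eq_one_comm.mp hUu
  intro i j
  -- inverse formula for t > 0
  have hinv : ∀ t : ℝ, 0 < t →
      (A + (t:ℂ) • 1)⁻¹ = Uu * Matrix.diagonal (fun k => (((a k + t)⁻¹ : ℝ) : ℂ)) * Uuᴴ := by
    intro t ht
    have key : A + (t:ℂ) • 1 = Uu * Matrix.diagonal (fun k => ((a k : ℂ) + (t:ℂ))) * Uuᴴ := by
      rw [hdecomp, smul_one_UDU hUU (t:ℂ)]
      rw [← Matrix.add_mul, ← Matrix.mul_add, Matrix.diagonal_add]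
    apply Matrix.inv_eq_right_inv
    rw [key]
    have hd : Matrix.diagonal (fun k => ((a k : ℂ) + (t:ℂ))) *
        (Uuᴴ * (Uu * (Matrix.diagonal (fun k => (((a k + t)⁻¹ : ℝ) : ℂ)) * Uuᴴ))) =
        Uuᴴ := by
      rw [← Matrix.mul_assoc Uuᴴ Uu, hUu, Matrix.one_mul, ← Matrix.mul_assoc,
        Matrix.diagonal_mul_diagonal]
      have : (fun k => ((a k : ℂ) + (t:ℂ)) * (((a k + t)⁻¹ : ℝ) : ℂ)) = fun _ => (1:ℂ) := by
        funext k
        have hk : (a k + t : ℝ) ≠ 0 := by have := ha k; positivity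
        push_cast
        exact mul_inv_cancel₀ (by exact_mod_cast hk)
      rw [this, Matrix.diagonal_one, Matrix.one_mul]
    calc Uu * Matrix.diagonal (fun k => ((a k : ℂ) + (t:ℂ))) * Uuᴴ *
          (Uu * Matrix.diagonal (fun k => (((a k + t)⁻¹ : ℝ) : ℂ)) * Uuᴴ)
        = Uu * (Matrix.diagonal (fun k => ((a k : ℂ) + (t:ℂ))) *
            (Uuᴴ * (Uu * (Matrix.diagonal (fun k => (((a k + t)⁻¹ : ℝ) : ℂ)) * Uuᴴ)))) := by
          simp only [Matrix.mul_assoc]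
      _ = Uu * Uuᴴ := by rw [hd]
      _ = 1 := hUU
  -- rewrite the integrand on Ioi 0
  have hcongr : ∀ t ∈ Set.Ioi (0:ℝ),
      ((((1 + t)⁻¹ : ℝ) • (1 : Matrix (Fin d) (Fin d) ℂ) - (A + (t:ℂ) • 1)⁻¹) i j)
      = ∑ k, (Uu i k * star (Uu j k)) * ((((1+t)⁻¹ - (a k + t)⁻¹ : ℝ)) : ℂ) := by
    intro t ht
    rw [Set.mem_Ioi] at ht
    have hsmul : ((1 + t)⁻¹ : ℝ) • (1 : Matrix (Fin d) (Fin d) ℂ)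
        = ((((1+t)⁻¹ : ℝ)) : ℂ) • (1 : Matrix (Fin d) (Fin d) ℂ) := by
      ext i' j'
      simp [Complex.real_smul]
    rw [hsmul, smul_one_UDU hUU, hinv t ht, ← Matrix.sub_mul, ← Matrix.mul_sub,
      Matrix.diagonal_sub, entry_UDU]
    apply Finset.sum_congr rfl
    intro k _
    push_cast
    ring
  rw [MeasureTheory.setIntegral_congr_fun measurableSet_Ioi hcongr]
  have hintk : ∀ k : Fin d, MeasureTheory.IntegrableOn
      (fun t => (Uu i k * star (Uu j k)) * ((((1+t)⁻¹ - (a k + t)⁻¹ : ℝ)) : ℂ)) (Set.Ioi (0:ℝ)) :=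
    fun k => ((scalar_key (ha k)).1.ofReal.const_mul _)
  rw [MeasureTheory.integral_finset_sum _ (fun k _ => hintk k)]
  have : ∀ k : Fin d, (∫ t in Set.Ioi (0:ℝ),
      (Uu i k * star (Uu j k)) * ((((1+t)⁻¹ - (a k + t)⁻¹ : ℝ)) : ℂ))
      = (Uu i k * star (Uu j k)) * ((Real.log (a k) : ℝ) : ℂ) := by
    intro k
    rw [MeasureTheory.integral_const_mul,
      show (∫ t in Set.Ioi (0:ℝ), ((((1+t)⁻¹ - (a k + t)⁻¹ : ℝ)) : ℂ))
        = ((∫ t in Set.Ioi (0:ℝ), ((1+t)⁻¹ - (a k + t)⁻¹) : ℝ) : ℂ) from integral_ofReal,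
      (scalar_key (ha k)).2]
  simp only [this]
  rw [hlog, entry_UDU]
  apply Finset.sum_congr rfl
  intro k _
  ring
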